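/- Let S ⊆ ℝ^n be compact, P : S → S continuous, and x* ∈ S a fixed point of P that is stable and globally attractive on S. Then there exists a class-KL function β with β(s,0) ≥ s for all s ≥ 0 such that |P^k(x) − x*| ≤ β(|x − x*|, k) for every x ∈ S and every k ∈ ℕ, where P^k denotes the k-fold composition of P. -/

import Mathlib

open Set Metric Filter
open Topology intervalIntegral MeasureTheory

noncomputable def ghat (g : ℝ → ℝ) (s : ℝ) : ℝ := ∫ v in (1:ℝ)..2, g (s * v)
noncomputable def rho (w : ℝ → ℝ) (t : ℝ) : ℝ := ∫ u in (t-1)..t, w u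

lemma ghat_integrable {g : ℝ → ℝ} (hg : Monotone g) {s : ℝ} (hs : 0 ≤ s) :
    IntervalIntegrable (fun v => g (s * v)) volume 1 2 :=
  (hg.comp fun a b h => mul_le_mul_of_nonneg_left h hs).intervalIntegrable

lemma ghat_monotoneOn {g : ℝ → ℝ} (hg : Monotone g) : MonotoneOn (ghat g) (Ici 0) := by
  intro a ha b hb hab
  apply integral_mono_on (by norm_num) (ghat_integrable hg ha) (ghat_integrable hg hb)
  intro v hv
  exact hg (mul_le_mul_of_nonneg_right hab (le_trans zero_le_one hv.1))

lemma le_ghat {g : ℝ → ℝ} (hg : Monotone g) {s : ℝ} (hs : 0 ≤ s) : g s ≤ ghat g s := by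
  have : g s = ∫ _ in (1:ℝ)..2, g s := by rw [intervalIntegral.integral_const]; norm_num
  rw [this]
  apply integral_mono_on (by norm_num) (intervalIntegrable_const) (ghat_integrable hg hs)
  intro v hv
  exact hg (le_mul_of_one_le_right hs hv.1)

lemma ghat_le {g : ℝ → ℝ} (hg : Monotone g) {s : ℝ} (hs : 0 ≤ s) : ghat g s ≤ g (2 * s) := by
  have : g (2*s) = ∫ _ in (1:ℝ)..2, g (2*s) := by rw [intervalIntegral.integral_const]; norm_num
  rw [this]
  apply integral_mono_on (by norm_num) (ghat_integrable hg hs) (intervalIntegrable_const)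
  intro v hv
  exact hg (by nlinarith [hv.2])

lemma ghat_continuousOn {g : ℝ → ℝ} (hg : Monotone g) (hg0 : g 0 = 0)
    (hlim : ∀ ε > (0:ℝ), ∃ δ > (0:ℝ), ∀ u, 0 ≤ u → u ≤ δ → g u ≤ ε) :
    ContinuousOn (ghat g) (Ici 0) := by
  have hgnn : ∀ u, 0 ≤ u → 0 ≤ g u := fun u hu => hg0 ▸ hg hu
  intro s hs
  rcases eq_or_lt_of_le (Set.mem_Ici.mp hs : (0:ℝ) ≤ s) with h0 | hpos
  · -- continuity at 0 by squeeze
    subst h0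
    have hghat0 : ghat g 0 = 0 := by simp [ghat, hg0]
    rw [ContinuousWithinAt, hghat0, Metric.tendsto_nhdsWithin_nhds]
    intro ε hε
    obtain ⟨δ, hδ, hδp⟩ := hlim (ε/2) (by linarith)
    refine ⟨δ/2, by linarith, fun {u} hu hdu => ?_⟩
    have hu0 : (0:ℝ) ≤ u := hu
    have : ghat g u ≤ ε/2 := le_trans (ghat_le hg hu0) (hδp _ (by linarith) (by
      rw [Real.dist_eq] at hdu
      have := abs_lt.mp hdu
      linarith [this.2]))
    have h0 : 0 ≤ ghat g u := by
      rw [show (0:ℝ) = ghat g 0 by simp [ghat, hg0]]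
      exact ghat_monotoneOn hg (Set.mem_Ici.mpr le_rfl) (Set.mem_Ici.mpr hu0) hu0
    rw [Real.dist_eq, abs_of_nonneg (by linarith)]
    simpa using by linarith
  · -- continuity at s > 0
    apply ContinuousAt.continuousWithinAt
    set F : ℝ → ℝ := fun b => ∫ x in (0:ℝ)..b, g x with hF
    have hFc : Continuous F := continuous_primitive (fun a b => hg.intervalIntegrable) 0
    have heq : ∀ u : ℝ, u ≠ 0 → ghat g u = u⁻¹ * (F (u*2) - F (u*1)) := by
      intro u hu
      rw [ghat, integral_comp_mul_left _ hu, smul_eq_mul]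
      congr 1
      have h1 : IntervalIntegrable g volume 0 (u*1) := hg.intervalIntegrable
      have h2 : IntervalIntegrable g volume (u*1) (u*2) := hg.intervalIntegrable
      have := integral_add_adjacent_intervals h1 h2
      linarith [this]
    have : ContinuousAt (fun u : ℝ => u⁻¹ * (F (u*2) - F (u*1))) s := by
      apply ContinuousAt.mul
      · exact continuousAt_inv₀ (ne_of_gt hpos)
      · exact ((hFc.comp (continuous_id.mul continuous_const)).sub
          (hFc.comp (continuous_id.mul continuous_const))).continuousAt
    apply this.congr
    filter_upwards [eventually_ne_nhds (ne_of_gt hpos)] with u hu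
    exact (heq u hu).symm

lemma rho_integrable {w : ℝ → ℝ} (hw : Antitone w) (a b : ℝ) :
    IntervalIntegrable w volume a b := hw.intervalIntegrable

lemma rho_continuous {w : ℝ → ℝ} (hw : Antitone w) : Continuous (rho w) := by
  have hFc : Continuous (fun b => ∫ x in (0:ℝ)..b, w x) :=
    continuous_primitive (fun a b => hw.intervalIntegrable) 0
  have heq : ∀ t, rho w t = (∫ x in (0:ℝ)..t, w x) - ∫ x in (0:ℝ)..(t-1), w x := by
    intro t
    have := integral_add_adjacent_intervals (μ := volume) (a := (0:ℝ)) (b := t-1) (c := t)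
      hw.intervalIntegrable hw.intervalIntegrable
    rw [rho]; linarith
  simp only [funext heq]
  exact hFc.sub (hFc.comp (continuous_id.sub continuous_const))

lemma rho_antitone {w : ℝ → ℝ} (hw : Antitone w) : Antitone (rho w) := by
  intro t t' h
  have : rho w t' = ∫ u in (t-1)..t, w (u + (t'-t)) := by
    rw [integral_comp_add_right]
    rw [rho]; congr 1 <;> ring
  rw [this, rho]
  apply integral_mono_on (by linarith) _ hw.intervalIntegrable
  · intro u _; exact hw (by linarith)
  · have ha : Antitone fun u : ℝ => w (u + (t'-t)) :=
      fun a b hab => hw (by linarith : a + (t'-t) ≤ b + (t'-t))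
    exact ha.intervalIntegrable

lemma le_rho {w : ℝ → ℝ} (hw : Antitone w) (t : ℝ) : w t ≤ rho w t := by
  have : w t = ∫ _ in (t-1)..t, w t := by simp
  rw [this, rho]
  apply integral_mono_on (by linarith) intervalIntegrable_const hw.intervalIntegrable
  intro u hu; exact hw hu.2

lemma rho_le {w : ℝ → ℝ} (hw : Antitone w) (t : ℝ) : rho w t ≤ w (t-1) := by
  have : w (t-1) = ∫ _ in (t-1)..t, w (t-1) := by simp
  rw [this, rho]
  apply integral_mono_on (by linarith) hw.intervalIntegrable intervalIntegrable_const
  intro u hu; exact hw hu.1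

lemma rho_nonneg {w : ℝ → ℝ} (hw : Antitone w) (hnn : ∀ u, 0 ≤ w u) (t : ℝ) : 0 ≤ rho w t :=
  integral_nonneg (by linarith) (fun u _ => hnn u)

/-- A function `β : [0,∞) × [0,∞) → [0,∞)` of class `KL`: continuous, zero at `s = 0`,
nondecreasing in `s`, and nonincreasing in `t` with limit `0` at infinity. -/
def IsClassKL (β : ℝ → ℝ → ℝ) : Prop :=
  ContinuousOn (fun q : ℝ × ℝ => β q.1 q.2) (Set.Ici 0 ×ˢ Set.Ici 0) ∧
  (∀ s t : ℝ, 0 ≤ s → 0 ≤ t → 0 ≤ β s t) ∧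
  (∀ t : ℝ, 0 ≤ t → β 0 t = 0) ∧
  (∀ t : ℝ, 0 ≤ t → MonotoneOn (fun s => β s t) (Set.Ici 0)) ∧
  (∀ s : ℝ, 0 ≤ s → AntitoneOn (fun t => β s t) (Set.Ici 0)) ∧
  (∀ s : ℝ, 0 ≤ s → Tendsto (fun t => β s t) atTop (nhds 0))

set_option maxHeartbeats 1000000 in
/-- A stable and globally attractive fixed point of a continuous map `P : S → S` on a
compact set `S` admits a class-`KL` bound. -/
theorem stmt_8 (n : ℕ) (hn : 1 ≤ n)
    (S : Set (EuclideanSpace ℝ (Fin n))) (hS : IsCompact S)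
    (P : EuclideanSpace ℝ (Fin n) → EuclideanSpace ℝ (Fin n))
    (hPmaps : MapsTo P S S) (hPcont : ContinuousOn P S)
    (xstar : EuclideanSpace ℝ (Fin n)) (hxS : xstar ∈ S)
    (hfix : P xstar = xstar)
    (hstable : ∀ ε > (0:ℝ), ∃ δ > (0:ℝ), ∀ x ∈ S, dist x xstar ≤ δ →
      ∀ k : ℕ, dist (P^[k] x) xstar ≤ ε)
    (hattr : ∀ x ∈ S, Tendsto (fun k : ℕ => P^[k] x) atTop (nhds xstar)) :
    ∃ β : ℝ → ℝ → ℝ, IsClassKL β ∧ (∀ s : ℝ, 0 ≤ s → s ≤ β s 0) ∧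
      ∀ x ∈ S, ∀ k : ℕ, dist (P^[k] x) xstar ≤ β (dist x xstar) (k : ℝ) := by
  classical
  obtain ⟨z, hzS, hzmax⟩ := hS.exists_isMaxOn ⟨xstar, hxS⟩
    ((continuous_id.dist continuous_const).continuousOn :
      ContinuousOn (fun y => dist y xstar) S)
  rw [isMaxOn_iff] at hzmax
  set D := dist z xstar with hDdef
  have hD0 : (0:ℝ) ≤ D := dist_nonneg
  have hiter : ∀ k : ℕ, ∀ x ∈ S, P^[k] x ∈ S := fun k x hx => hPmaps.iterate k hx
  -- the stability modulus g
  set gset : ℝ → Set ℝ := fun s =>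
    insert 0 {d | ∃ x ∈ S, dist x xstar ≤ s ∧ ∃ k : ℕ, d = dist (P^[k] x) xstar} with hgset
  have gbdd : ∀ s, BddAbove (gset s) := by
    intro s
    refine ⟨D, ?_⟩
    rintro d (rfl | ⟨x, hx, -, k, rfl⟩)
    · exact hD0
    · exact hzmax _ (hiter k x hx)
  have gne : ∀ s, (gset s).Nonempty := fun s => ⟨0, mem_insert 0 _⟩
  set g : ℝ → ℝ := fun s => sSup (gset s) with hgdef
  have gmono : Monotone g := by
    intro a b hab
    apply csSup_le_csSup (gbdd b) (gne a)
    rintro d (rfl | ⟨x, hx, hle, k, rfl⟩)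
    · exact mem_insert _ _
    · exact subset_insert _ _ ⟨x, hx, hle.trans hab, k, rfl⟩
  have gnonneg : ∀ s, 0 ≤ g s := fun s => le_csSup (gbdd s) (mem_insert 0 _)
  have hg0 : g 0 = 0 := by
    refine le_antisymm (csSup_le (gne 0) ?_) (gnonneg 0)
    rintro d (rfl | ⟨x, hx, hle, k, rfl⟩)
    · exact le_rfl
    · have hxx : x = xstar := by rwa [← dist_le_zero]
      subst hxx
      rw [Function.iterate_fixed hfix, dist_self]
  have glim : ∀ ε > (0:ℝ), ∃ δ > (0:ℝ), ∀ u, 0 ≤ u → u ≤ δ → g u ≤ ε := by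
    intro ε hε
    obtain ⟨δ, hδ, hp⟩ := hstable ε hε
    refine ⟨δ, hδ, fun u hu0 huδ => csSup_le (gne u) ?_⟩
    rintro d (rfl | ⟨x, hx, hle, k, rfl⟩)
    · exact hε.le
    · exact hp x hx (hle.trans huδ) k
  have gbound : ∀ x ∈ S, ∀ k : ℕ, dist (P^[k] x) xstar ≤ g (dist x xstar) :=
    fun x hx k => le_csSup (gbdd _) (subset_insert _ _ ⟨x, hx, le_rfl, k, rfl⟩)
  -- iterates are continuous on S
  have iterCont : ∀ N : ℕ, ContinuousOn (P^[N]) S := by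
    intro N
    induction N with
    | zero => simpa using continuousOn_id
    | succ N ih =>
        rw [Function.iterate_succ]
        exact ih.comp hPcont hPmaps
  -- uniform attraction
  have hunif : ∀ ε > (0:ℝ), ∃ T : ℕ, ∀ x ∈ S, ∀ k, T ≤ k → dist (P^[k] x) xstar ≤ ε := by
    intro ε hε
    obtain ⟨δ, hδ, hst⟩ := hstable ε hε
    have key : ∀ x : EuclideanSpace ℝ (Fin n), ∃ (N : ℕ) (U : Set (EuclideanSpace ℝ (Fin n))),
        x ∈ S → U ∈ 𝓝 x ∧ ∀ y ∈ U ∩ S, dist (P^[N] y) xstar ≤ δ := by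
      intro x
      by_cases hx : x ∈ S
      · obtain ⟨N, hN⟩ := (Metric.tendsto_atTop.mp (hattr x hx)) δ hδ
        have hNx : dist (P^[N] x) xstar < δ := hN N le_rfl
        have hct : ContinuousWithinAt (P^[N]) S x := iterCont N x hx
        have hball : Metric.ball xstar δ ∈ 𝓝 (P^[N] x) := Metric.isOpen_ball.mem_nhds hNx
        have hpre : (P^[N]) ⁻¹' Metric.ball xstar δ ∈ 𝓝[S] x :=
          hct.preimage_mem_nhdsWithin hball
        rw [mem_nhdsWithin_iff_exists_mem_nhds_inter] at hpre
        obtain ⟨U, hU, hUsub⟩ := hpre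
        exact ⟨N, U, fun _ => ⟨hU, fun y hy => le_of_lt (hUsub hy)⟩⟩
      · exact ⟨0, univ, fun h => absurd h hx⟩
    choose N U hNU using key
    obtain ⟨t, htS, hcov⟩ := hS.elim_nhds_subcover U (fun x hx => (hNU x hx).1)
    refine ⟨t.sup N, fun y hy k hk => ?_⟩
    obtain ⟨x, hxt, hyU⟩ := mem_iUnion₂.mp (hcov hy)
    have h1 : dist (P^[N x] y) xstar ≤ δ := (hNU x (htS x hxt)).2 y ⟨hyU, hy⟩
    have h2 : N x ≤ k := le_trans (Finset.le_sup hxt) hk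
    have hsplit : P^[k] y = P^[k - N x] (P^[N x] y) := by
      rw [← Function.iterate_add_apply]
      congr 1
      omega
    rw [hsplit]
    exact hst _ (hiter (N x) y hy) h1 (k - N x)
  -- the attraction rate w
  set wset : ℕ → Set ℝ := fun k =>
    insert 0 {d | ∃ x ∈ S, ∃ j : ℕ, k ≤ j ∧ d = dist (P^[j] x) xstar} with hwset
  have wbdd : ∀ k, BddAbove (wset k) := by
    intro k
    refine ⟨D, ?_⟩
    rintro d (rfl | ⟨x, hx, j, -, rfl⟩)
    · exact hD0
    · exact hzmax _ (hiter j x hx)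
  have wne : ∀ k, (wset k).Nonempty := fun k => ⟨0, mem_insert 0 _⟩
  set wseq : ℕ → ℝ := fun k => sSup (wset k) with hwseqdef
  have wanti : Antitone wseq := by
    intro a b hab
    apply csSup_le_csSup (wbdd a) (wne b)
    rintro d (rfl | ⟨x, hx, j, hj, rfl⟩)
    · exact mem_insert _ _
    · exact subset_insert _ _ ⟨x, hx, j, hab.trans hj, rfl⟩
  have wnonneg : ∀ k, 0 ≤ wseq k := fun k => le_csSup (wbdd k) (mem_insert 0 _)
  have wbound : ∀ x ∈ S, ∀ k : ℕ, dist (P^[k] x) xstar ≤ wseq k :=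
    fun x hx k => le_csSup (wbdd _) (subset_insert _ _ ⟨x, hx, k, le_rfl, rfl⟩)
  have wsmall : ∀ ε > (0:ℝ), ∃ T : ℕ, ∀ k, T ≤ k → wseq k ≤ ε := by
    intro ε hε
    obtain ⟨T, hT⟩ := hunif ε hε
    refine ⟨T, fun k hk => csSup_le (wne k) ?_⟩
    rintro d (rfl | ⟨x, hx, j, hj, rfl⟩)
    · exact hε.le
    · exact hT x hx j (hk.trans hj)
  set w : ℝ → ℝ := fun t => wseq ⌈t⌉₊ with hwdef
  have hwanti : Antitone w := fun a b hab => wanti (Nat.ceil_mono hab)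
  have hwnn : ∀ u, 0 ≤ w u := fun u => wnonneg _
  have hw_nat : ∀ k : ℕ, w (k : ℝ) = wseq k := by
    intro k
    simp [hwdef, Nat.ceil_natCast]
  have hwtend : Tendsto w atTop (nhds 0) := by
    rw [Metric.tendsto_atTop]
    intro ε hε
    obtain ⟨T, hT⟩ := wsmall (ε/2) (by linarith)
    refine ⟨(T : ℝ), fun t ht => ?_⟩
    have hTle : (T : ℝ) ≤ (⌈t⌉₊ : ℝ) := ht.trans (Nat.le_ceil t)
    have : wseq ⌈t⌉₊ ≤ ε/2 := hT _ (by exact_mod_cast hTle)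
    rw [Real.dist_eq, sub_zero, abs_of_nonneg (hwnn t)]
    calc w t ≤ ε/2 := this
      _ < ε := by linarith
  -- assemble β
  have hghat_nn : ∀ s, 0 ≤ s → 0 ≤ ghat g s := fun s hs => (gnonneg s).trans (le_ghat gmono hs)
  have hrho_nn : ∀ t, 0 ≤ rho w t := rho_nonneg hwanti hwnn
  have hghat0 : ghat g 0 = 0 := by simp [ghat, hg0]
  have hrho_anti := rho_antitone hwanti
  refine ⟨fun s t => min (s + ghat g s) (rho w t + s * Real.exp (-t)),
    ⟨?_, ?_, ?_, ?_, ?_, ?_⟩, ?_, ?_⟩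
  · -- continuity
    have cf : ContinuousOn (fun q : ℝ × ℝ => q.1 + ghat g q.1) (Set.Ici 0 ×ˢ Set.Ici 0) :=
      continuousOn_fst.add
        ((ghat_continuousOn gmono hg0 glim).comp continuousOn_fst (fun q hq => hq.1))
    have cg : Continuous (fun q : ℝ × ℝ => rho w q.2 + q.1 * Real.exp (-q.2)) :=
      ((rho_continuous hwanti).comp continuous_snd).add
        (continuous_fst.mul (Real.continuous_exp.comp continuous_snd.neg))
    exact continuous_min.comp_continuousOn (ContinuousOn.prodMk cf cg.continuousOn)
  · -- nonneg
    intro s t hs ht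
    exact le_min (add_nonneg hs (hghat_nn s hs))
      (add_nonneg (hrho_nn t) (mul_nonneg hs (Real.exp_nonneg _)))
  · -- zero at s = 0
    intro t ht
    show min (0 + ghat g 0) (rho w t + 0 * Real.exp (-t)) = 0
    rw [hghat0, zero_mul, add_zero, add_zero]
    exact min_eq_left (hrho_nn t)
  · -- monotone in s
    intro t ht a ha b hb hab
    exact min_le_min (add_le_add hab (ghat_monotoneOn gmono ha hb hab))
      (add_le_add le_rfl (mul_le_mul_of_nonneg_right hab (Real.exp_nonneg _)))
  · -- antitone in t
    intro s hs a ha b hb hab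
    exact min_le_min le_rfl (add_le_add (hrho_anti hab)
      (mul_le_mul_of_nonneg_left (Real.exp_le_exp.mpr (neg_le_neg hab)) hs))
  · -- tendsto 0
    intro s hs
    apply squeeze_zero (g := fun t => rho w t + s * Real.exp (-t))
    · intro t
      exact le_min (add_nonneg hs (hghat_nn s hs))
        (add_nonneg (hrho_nn t) (mul_nonneg hs (Real.exp_nonneg _)))
    · intro t
      exact min_le_right _ _
    · have h1 : Tendsto (rho w) atTop (nhds 0) := by
        apply squeeze_zero hrho_nn (rho_le hwanti)
        exact hwtend.comp (tendsto_atTop_add_const_right atTop (-1) tendsto_id)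
      have h2 : Tendsto (fun t : ℝ => s * Real.exp (-t)) atTop (nhds (s * 0)) :=
        (Real.tendsto_exp_neg_atTop_nhds_zero).const_mul s
      simpa using h1.add h2
  · -- β s 0 ≥ s
    intro s hs
    apply le_min
    · linarith [hghat_nn s hs]
    · have := hrho_nn 0
      rw [neg_zero, Real.exp_zero, mul_one]
      linarith
  · -- the KL bound
    intro x hx k
    apply le_min
    · have h1 := gbound x hx k
      have h2 := le_ghat gmono (dist_nonneg (x := x) (y := xstar))
      have h3 : (0:ℝ) ≤ dist x xstar := dist_nonneg
      linarith
    · calc dist (P^[k] x) xstar ≤ wseq k := wbound x hx k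
        _ = w (k : ℝ) := (hw_nat k).symm
        _ ≤ rho w (k : ℝ) := le_rho hwanti _
        _ ≤ rho w (k : ℝ) + dist x xstar * Real.exp (-(k:ℝ)) :=
            le_add_of_nonneg_right (mul_nonneg dist_nonneg (Real.exp_nonneg _))
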